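/- If F(A) is a single point {c}, then A = c·I. -/

import Mathlib

open Matrix

theorem fov_singleton_implies_scalar (n : ℕ) (hn : 1 ≤ n)
    (A : Matrix (Fin n) (Fin n) ℂ) (c : ℂ)
    (h : {z : ℂ | ∃ x : EuclideanSpace ℂ (Fin n), ‖x‖ = 1 ∧
        star (x : Fin n → ℂ) ⬝ᵥ A.mulVec (x : Fin n → ℂ) = z} = {c}) :
    A = c • (1 : Matrix (Fin n) (Fin n) ℂ) := by
  have key : ∀ x : EuclideanSpace ℂ (Fin n), ‖x‖ = 1 →
      star (x : Fin n → ℂ) ⬝ᵥ A.mulVec (x : Fin n → ℂ) = c := by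
    intro x hx
    have hm : star (x : Fin n → ℂ) ⬝ᵥ A.mulVec (x : Fin n → ℂ) ∈ ({c} : Set ℂ) := by
      rw [← h]; exact ⟨x, hx, rfl⟩
    simpa using hm
  have key2 : ∀ x : EuclideanSpace ℂ (Fin n),
      star (x : Fin n → ℂ) ⬝ᵥ A.mulVec (x : Fin n → ℂ) = c * (‖x‖ : ℂ) ^ 2 := by
    intro x
    by_cases hx : x = 0
    · subst hx
      simp [show ((0 : EuclideanSpace ℂ (Fin n)) : Fin n → ℂ) = 0 from rfl]
    · have hr : (‖x‖ : ℝ) ≠ 0 := norm_ne_zero_iff.mpr hx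
      set a : ℂ := (‖x‖ : ℂ)⁻¹ with ha
      have hu : ‖a • x‖ = 1 := by
        rw [norm_smul, ha]
        simp [abs_of_nonneg (norm_nonneg x), hr]
      have hk := key (a • x) hu
      have hc : ((a • x : EuclideanSpace ℂ (Fin n)) : Fin n → ℂ) = a • (x : Fin n → ℂ) := rfl
      rw [hc, star_smul, Matrix.mulVec_smul, smul_dotProduct,
        dotProduct_smul] at hk
      have hsa : star a = a := by
        rw [ha]; simp [Complex.star_def, Complex.conj_ofReal]
      rw [hsa, smul_smul, smul_eq_mul, ha] at hk
      have hrc : (‖x‖ : ℂ) ≠ 0 := by exact_mod_cast hr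
      field_simp at hk
      rw [pow_two]
      linear_combination hk
  set B : Matrix (Fin n) (Fin n) ℂ := A - c • (1 : Matrix (Fin n) (Fin n) ℂ) with hB
  set T := Matrix.toEuclideanLin B with hT
  have hz : ∀ x : EuclideanSpace ℂ (Fin n), inner ℂ (T x) x = (0 : ℂ) := by
    intro x
    have h1 : inner ℂ x (T x) = (0 : ℂ) := by
      rw [hT, Matrix.toEuclideanLin_apply, EuclideanSpace.inner_eq_star_dotProduct]
      have : (WithLp.toLp 2 (B *ᵥ x.ofLp)).ofLp ⬝ᵥ star x.ofLp = star ((WithLp.equiv 2 (Fin n → ℂ)) x) ⬝ᵥ (B *ᵥ (WithLp.equiv 2 (Fin n → ℂ)) x) := by rw [dotProduct_comm]; rfl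
      rw [this, hB, Matrix.sub_mulVec, dotProduct_sub]
      have hiq : star ((WithLp.equiv 2 (Fin n → ℂ)) x) ⬝ᵥ ((c • (1 : Matrix (Fin n) (Fin n) ℂ)) *ᵥ (WithLp.equiv 2 (Fin n → ℂ)) x) = c * ((‖x‖ : ℂ))^2 := by
        rw [Matrix.smul_mulVec, Matrix.one_mulVec, dotProduct_smul]
        have : star ((WithLp.equiv 2 (Fin n → ℂ)) x) ⬝ᵥ ((WithLp.equiv 2 (Fin n → ℂ)) x) = inner ℂ x x := by rw [EuclideanSpace.inner_eq_star_dotProduct, dotProduct_comm]; rfl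
        rw [smul_eq_mul, this, inner_self_eq_norm_sq_to_K]
        norm_cast
      rw [hiq]
      have := key2 x
      rw [show ((WithLp.equiv 2 (Fin n → ℂ)) x) = (x : Fin n → ℂ) from rfl, this]
      ring
    rw [← inner_conj_symm, h1, map_zero]
  have hT0 : T = 0 := (inner_map_self_eq_zero T).mp hz
  have hB0 : B = 0 := by
    have := Matrix.toEuclideanLin.injective (by rw [← hT, hT0]; simp : Matrix.toEuclideanLin B = Matrix.toEuclideanLin 0)
    simpa using this
  rw [← sub_eq_zero]; exact hB0
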